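/- arXiv:0802.1919 — 3 statements merged into one kernel-verified Lean document; each statement's English description precedes it below -/
import Mathlib

section
/- The stationary distribution of the 'zero chain' Markov chain P on state space {1,…,n} with P(x,x−1) = 2x(x−1)/(5n(n−1)), P(x,x+1) = 6x(n−x)/(5n(n−1)), P(x,x) = 1 − 2x(3n−2x−1)/(5n(n−1)) is π₀(x) = 3^x · C(n,x)/(4^n − 1), i.e., Σ_{y} P(y,x) π₀(y) = π₀(x) for all x ∈ {1,…,n}. -/
/-- Transition matrix of the "zero chain" on `{1,…,n}`:
`P(x,x−1) = 2x(x−1)/(5n(n−1))`, `P(x,x+1) = 6x(n−x)/(5n(n−1))`,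
`P(x,x) = 1 − 2x(3n−2x−1)/(5n(n−1))`, all other entries zero. -/
noncomputable def zeroChain (n : ℕ) (x y : ℕ) : ℝ :=
  if y = x + 1 then 6 * x * ((n : ℝ) - x) / (5 * n * (n - 1))
  else if x = y + 1 then 2 * x * ((x : ℝ) - 1) / (5 * n * (n - 1))
  else if y = x then 1 - 2 * x * (3 * (n : ℝ) - 2 * x - 1) / (5 * n * (n - 1))
  else 0

/-- The distribution `π₀(x) = 3^x C(n,x)/(4^n − 1)` is stationary for the zero chain:
for every `x ∈ {1,…,n}`, `Σ_{y=1}^n P(y,x) π₀(y) = π₀(x)`. -/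
theorem stmt_7 (n : ℕ) (hn : 2 ≤ n)
    (π₀ : ℕ → ℝ) (hπ₀ : ∀ x, π₀ x = 3 ^ x * (n.choose x : ℝ) / (4 ^ n - 1)) :
    ∀ x ∈ Finset.Icc 1 n,
      ∑ y ∈ Finset.Icc 1 n, zeroChain n y x * π₀ y = π₀ x := by
  intro x hx
  rw [Finset.mem_Icc] at hx
  obtain ⟨hx1, hxn⟩ := hx
  obtain ⟨k, rfl⟩ : ∃ k, x = k + 1 := ⟨x - 1, by omega⟩
  -- extend sum to Icc 0 (n+1)
  have hstep1 : ∑ y ∈ Finset.Icc 1 n, zeroChain n y (k+1) * π₀ y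
      = ∑ y ∈ Finset.Icc 0 (n+1), zeroChain n y (k+1) * π₀ y := by
    apply Finset.sum_subset
    · intro y hy
      simp only [Finset.mem_Icc] at *
      omega
    · intro y hy hny
      simp only [Finset.mem_Icc] at hy hny
      have : y = 0 ∨ y = n + 1 := by omega
      rcases this with rfl | rfl
      · simp [zeroChain]
      · have : n.choose (n+1) = 0 := Nat.choose_eq_zero_of_lt (by omega)
        rw [hπ₀, this]
        simp
  -- restrict to the triple {k, k+1, k+2}
  have hstep2 : ∑ y ∈ Finset.Icc 0 (n+1), zeroChain n y (k+1) * π₀ y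
      = ∑ y ∈ ({k, k+1, k+2} : Finset ℕ), zeroChain n y (k+1) * π₀ y := by
    symm
    apply Finset.sum_subset
    · intro y hy
      simp only [Finset.mem_insert, Finset.mem_singleton] at hy
      simp only [Finset.mem_Icc]
      omega
    · intro y hy hny
      simp only [Finset.mem_insert, Finset.mem_singleton] at hny
      push_neg at hny
      obtain ⟨h1, h2, h3⟩ := hny
      have c1 : ¬ (k + 1 = y + 1) := by omega
      have c2 : ¬ (y = k + 1 + 1) := by omega
      have c3 : ¬ (k + 1 = y) := by omega
      have c4 : ¬ (k = y) := by omega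
      simp [zeroChain, c1, c2, c3, c4]
  rw [hstep1, hstep2]
  have hne1 : (k : ℕ) ∉ ({k+1, k+2} : Finset ℕ) := by simp
  have hne2 : (k + 1 : ℕ) ∉ ({k+2} : Finset ℕ) := by simp
  rw [show ({k, k+1, k+2} : Finset ℕ) = insert k (insert (k+1) {k+2}) from rfl,
    Finset.sum_insert hne1, Finset.sum_insert hne2, Finset.sum_singleton]
  -- evaluate the three zeroChain entries
  have e1 : zeroChain n k (k+1) = 6 * k * ((n : ℝ) - k) / (5 * n * (n - 1)) := by
    simp [zeroChain]
  have e2 : zeroChain n (k+1) (k+1)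
      = 1 - 2 * (k+1) * (3 * (n : ℝ) - 2 * (k+1) - 1) / (5 * n * (n - 1)) := by
    simp [zeroChain]
  have e3 : zeroChain n (k+2) (k+1)
      = 2 * (k+2) * ((k+2 : ℝ) - 1) / (5 * n * (n - 1)) := by
    have c1 : ¬ (k + 1 = k + 2 + 1) := by omega
    simp [zeroChain, c1]
  rw [e1, e2, e3, hπ₀ k, hπ₀ (k+1), hπ₀ (k+2)]
  -- binomial identities
  have hkn : k + 1 ≤ n := hxn
  have r1 : ((n.choose (k+1) : ℝ)) * (k+1) = (n.choose k : ℝ) * ((n:ℝ) - k) := by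
    have := Nat.choose_succ_right_eq n k
    have hcast : ((n.choose (k+1) * (k+1) : ℕ) : ℝ) = ((n.choose k * (n - k) : ℕ) : ℝ) := by
      exact_mod_cast congrArg (Nat.cast (R := ℝ)) this
    push_cast [Nat.cast_sub (by omega : k ≤ n)] at hcast
    linarith [hcast]
  have r2 : ((n.choose (k+2) : ℝ)) * (k+2) = (n.choose (k+1) : ℝ) * ((n:ℝ) - (k+1)) := by
    have := Nat.choose_succ_right_eq n (k+1)
    have hcast : ((n.choose (k+2) * (k+2) : ℕ) : ℝ) = ((n.choose (k+1) * (n - (k+1)) : ℕ) : ℝ) := by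
      exact_mod_cast congrArg (Nat.cast (R := ℝ)) this
    push_cast [Nat.cast_sub (by omega : k + 1 ≤ n)] at hcast
    linarith [hcast]
  have hD : (5 * (n:ℝ) * ((n:ℝ) - 1)) ≠ 0 := by
    have h1 : (2:ℝ) ≤ (n:ℝ) := by exact_mod_cast hn
    have : (0:ℝ) < 5 * (n:ℝ) * ((n:ℝ) - 1) := by nlinarith
    linarith
  have h4 : (4:ℝ) ^ n - 1 ≠ 0 := by
    have : (1:ℝ) < 4 ^ n := by
      apply one_lt_pow₀ (by norm_num) (by omega)
    linarith
  have hn0 : (n:ℝ) ≠ 0 := by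
    have h1 : (2:ℝ) ≤ (n:ℝ) := by exact_mod_cast hn
    linarith
  have hn1 : (n:ℝ) - 1 ≠ 0 := by
    have h1 : (2:ℝ) ≤ (n:ℝ) := by exact_mod_cast hn
    linarith
  field_simp
  linear_combination ((-6*(k:ℝ)) * 3^k) * r1 +
    (18*((k:ℝ)+1) * 3^k) * r2
end

section
/- For the accelerated zero chain starting at x = 1 and moving right with probability 3(n−x)/(3n−2x−1) at position x, the probability of moving right in each of the first t consecutive steps (thus reaching position t+1) is at least 1 − t²/n. Equivalently: ∏_{x=1}^{t} 3(n−x)/(3n−2x−1) ≥ 1 − t²/n. -/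
/-- Weierstrass product inequality: `1 - ∑ f ≤ ∏ (1 - f)` for `0 ≤ f ≤ 1`. -/
lemma one_sub_sum_le_prod_one_sub' (s : Finset ℕ) (f : ℕ → ℝ)
    (h0 : ∀ i ∈ s, 0 ≤ f i) (h1 : ∀ i ∈ s, f i ≤ 1) :
    1 - ∑ i ∈ s, f i ≤ ∏ i ∈ s, (1 - f i) := by
  induction s using Finset.cons_induction with
  | empty => simp
  | cons a s ha ih =>
    simp only [Finset.sum_cons, Finset.prod_cons]
    have h0a := h0 a (Finset.mem_cons_self a s)
    have h1a := h1 a (Finset.mem_cons_self a s)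
    have h0' : ∀ i ∈ s, 0 ≤ f i := fun i hi => h0 i (Finset.mem_cons_of_mem hi)
    have h1' : ∀ i ∈ s, f i ≤ 1 := fun i hi => h1 i (Finset.mem_cons_of_mem hi)
    have hih := ih h0' h1'
    have hsum : 0 ≤ ∑ i ∈ s, f i := Finset.sum_nonneg h0'
    have hprod : (0:ℝ) ≤ ∏ i ∈ s, (1 - f i) :=
      Finset.prod_nonneg fun i hi => by linarith [h1' i hi]
    nlinarith [mul_le_mul_of_nonneg_left hih (by linarith : (0:ℝ) ≤ 1 - f a)]

/-- The probability that the accelerated zero chain moves right in each of the first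
`t` steps starting from `x = 1`, i.e. the product of the right-move probabilities
`3(n−x)/(3n−2x−1)` for `x = 1,…,t`, is at least `1 − t²/n`. -/
theorem stmt_10 (n t : ℕ) (ht : 0 < t) (htn : t < n) :
    (1 : ℝ) - (t : ℝ) ^ 2 / n ≤
      ∏ x ∈ Finset.Icc 1 t, (3 * ((n : ℝ) - x)) / (3 * (n : ℝ) - 2 * x - 1) := by
  have htn' : (t : ℝ) < n := by exact_mod_cast htn
  have ht' : (1 : ℝ) ≤ t := by exact_mod_cast ht
  have hn : (0:ℝ) < n := by linarith
  -- bounds for each x in Icc 1 t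
  have hx_facts : ∀ x ∈ Finset.Icc 1 t, (1:ℝ) ≤ (x:ℝ) ∧ (x:ℝ) ≤ t := by
    intro x hx
    rw [Finset.mem_Icc] at hx
    exact ⟨by exact_mod_cast hx.1, by exact_mod_cast hx.2⟩
  have hden : ∀ x ∈ Finset.Icc 1 t, (0:ℝ) < 3 * (n:ℝ) - 2 * x - 1 := by
    intro x hx
    obtain ⟨h1x, hxt⟩ := hx_facts x hx
    linarith
  set f : ℕ → ℝ := fun x => ((x:ℝ) - 1) / (3 * (n:ℝ) - 2 * x - 1) with hf
  have hprod_eq : ∏ x ∈ Finset.Icc 1 t, (3 * ((n : ℝ) - x)) / (3 * (n : ℝ) - 2 * x - 1)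
      = ∏ x ∈ Finset.Icc 1 t, (1 - f x) := by
    refine Finset.prod_congr rfl fun x hx => ?_
    have hd := hden x hx
    simp only [hf]
    rw [one_sub_div hd.ne']
    congr 1
    ring
  rw [hprod_eq]
  have h0 : ∀ x ∈ Finset.Icc 1 t, 0 ≤ f x := by
    intro x hx
    obtain ⟨h1x, hxt⟩ := hx_facts x hx
    exact div_nonneg (by linarith) (le_of_lt (hden x hx))
  have h1 : ∀ x ∈ Finset.Icc 1 t, f x ≤ 1 := by
    intro x hx
    obtain ⟨h1x, hxt⟩ := hx_facts x hx
    rw [hf, div_le_one (hden x hx)]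
    linarith
  have hsum : ∑ x ∈ Finset.Icc 1 t, f x ≤ (t:ℝ)^2 / n := by
    have hbound : ∀ x ∈ Finset.Icc 1 t, f x ≤ (t:ℝ) / n := by
      intro x hx
      obtain ⟨h1x, hxt⟩ := hx_facts x hx
      have hd := hden x hx
      rw [hf, div_le_div_iff₀ hd hn]
      nlinarith
    calc ∑ x ∈ Finset.Icc 1 t, f x ≤ ∑ x ∈ Finset.Icc 1 t, (t:ℝ)/n :=
          Finset.sum_le_sum hbound
      _ = (t:ℝ) * ((t:ℝ)/n) := by
          rw [Finset.sum_const, Nat.card_Icc]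
          simp [nsmul_eq_mul]
      _ = (t:ℝ)^2 / n := by ring
  calc (1:ℝ) - (t:ℝ)^2 / n ≤ 1 - ∑ x ∈ Finset.Icc 1 t, f x := by linarith
    _ ≤ ∏ x ∈ Finset.Icc 1 t, (1 - f x) := one_sub_sum_le_prod_one_sub' _ _ h0 h1
end

section
/- (Moment generating function of geometric sum) Let W(x) ~ Geo(βx/n) be independent geometric random variables (number of trials until first success, success probability βx/n) for x = 1,…,t, with 0 < β ≤ 1 and βt ≤ n. Let W = Σ_{x=1}^t W(x). Then with λ chosen so e^λ = 1/(1 − β/(2n)), one has E[e^{λW}] = ∏_{x=1}^t x/(x − 1/2) = t!Γ(1/2)/Γ(t+1/2) ≤ 2√t, and consequently Pr(W ≥ C·(n ln t)/β) ≤ 2 t^{(1−C)/2} for any C > 1. -/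
open MeasureTheory ProbabilityTheory

/-- Lintegral of `exp (el * N)` for a geometric random variable `N`. -/
lemma geom_lintegral_exp {Ω : Type*} [MeasurableSpace Ω] (μ : Measure Ω)
    [IsProbabilityMeasure μ] (N : Ω → ℕ) (hm : Measurable N)
    (p : ℝ) (hp0 : 0 < p) (hp1 : p ≤ 1)
    (h : ∀ k : ℕ, 1 ≤ k → μ {ω | N ω = k} = ENNReal.ofReal ((1 - p) ^ (k - 1) * p))
    (el : ℝ) (hlt : (1 - p) * Real.exp el < 1) :
    (∫⁻ ω, ENNReal.ofReal (Real.exp (el * (N ω : ℝ))) ∂μ)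
      = ENNReal.ofReal (p * Real.exp el / (1 - (1 - p) * Real.exp el)) := by
  have h1p : (0:ℝ) ≤ 1 - p := by linarith
  have hr0 : (0:ℝ) ≤ (1 - p) * Real.exp el := by positivity
  set ν : Measure ℕ := Measure.map N μ with hν
  haveI : IsProbabilityMeasure ν := Measure.isProbabilityMeasure_map hm.aemeasurable
  have hνk : ∀ k : ℕ, ν {k} = μ {ω | N ω = k} := by
    intro k
    rw [hν, Measure.map_apply hm (measurableSet_singleton k)]
    congr 1
  have htot : ∑' k : ℕ, ν {k} = 1 := by
    have := lintegral_countable' (μ := ν) (fun _ => (1 : ENNReal))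
    simpa [measure_univ] using this.symm
  have hsum1 : ∑' k : ℕ, ν {k + 1} = 1 := by
    have hterm : ∀ k : ℕ, ν {k + 1} = ENNReal.ofReal ((1 - p) ^ k * p) := by
      intro k
      rw [hνk, h (k + 1) (by omega)]
      simp
    calc ∑' k : ℕ, ν {k + 1} = ∑' k : ℕ, ENNReal.ofReal ((1 - p) ^ k * p) := by
          simp_rw [hterm]
      _ = ENNReal.ofReal (∑' k : ℕ, (1 - p) ^ k * p) := by
          rw [ENNReal.ofReal_tsum_of_nonneg (fun k => by positivity)
            ((summable_geometric_of_lt_one h1p (by linarith)).mul_right p)]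
      _ = 1 := by
          rw [tsum_mul_right, tsum_geometric_of_lt_one h1p (by linarith)]
          rw [show (1:ℝ) - (1 - p) = p by ring]
          rw [inv_mul_cancel₀ hp0.ne']
          simp
  have hν0 : ν {0} = 0 := by
    have hsplit := tsum_eq_zero_add' (f := fun k => ν {k}) ENNReal.summable
    rw [htot, hsum1] at hsplit
    have h2 := congrArg (· - 1) hsplit
    simpa [ENNReal.add_sub_cancel_right ENNReal.one_ne_top] using h2.symm
  have hmap : (∫⁻ ω, ENNReal.ofReal (Real.exp (el * (N ω : ℝ))) ∂μ)
      = ∑' k : ℕ, ENNReal.ofReal (Real.exp (el * (k : ℝ))) * ν {k} := by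
    rw [hν, ← lintegral_map (f := fun k : ℕ => ENNReal.ofReal (Real.exp (el * (k : ℝ))))
      (g := N) measurable_from_top hm, lintegral_countable']
  rw [hmap, tsum_eq_zero_add' ENNReal.summable, hν0, mul_zero, zero_add]
  have hterm : ∀ k : ℕ,
      ENNReal.ofReal (Real.exp (el * ((k + 1 : ℕ) : ℝ))) * ν {k + 1}
        = ENNReal.ofReal ((p * Real.exp el) * ((1 - p) * Real.exp el) ^ k) := by
    intro k
    rw [hνk, h (k + 1) (by omega)]
    simp only [Nat.add_sub_cancel]
    rw [← ENNReal.ofReal_mul (by positivity)]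
    congr 1
    have : Real.exp (el * ((k + 1 : ℕ) : ℝ)) = Real.exp el ^ k * Real.exp el := by
      push_cast
      rw [mul_add, mul_one, Real.exp_add, mul_comm el (k:ℝ), Real.exp_nat_mul]
    rw [this, mul_pow]
    ring
  simp_rw [hterm]
  rw [← ENNReal.ofReal_tsum_of_nonneg (fun k => by positivity)
    ((summable_geometric_of_lt_one hr0 hlt).mul_left _)]
  congr 1
  rw [tsum_mul_left, tsum_geometric_of_lt_one hr0 hlt]
  rw [div_eq_mul_inv]

/-- The product `∏_{x=1}^t x/(x-1/2)` is at most `2√t`. -/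
lemma prod_ratio_le_two_sqrt : ∀ t : ℕ, 1 ≤ t →
    ∏ x ∈ Finset.Icc 1 t, (x : ℝ) / ((x : ℝ) - 1 / 2) ≤ 2 * Real.sqrt t := by
  intro t ht
  induction t, ht using Nat.le_induction with
  | base => norm_num
  | succ t ht ih =>
    have ht0 : (0:ℝ) ≤ (t:ℝ) := Nat.cast_nonneg t
    have hpos : (0:ℝ) < (t:ℝ) + 1 - 1/2 := by linarith
    have key : 2 * Real.sqrt t * (((t:ℝ)+1) / ((t:ℝ)+1 - 1/2))
        ≤ 2 * Real.sqrt ((t:ℝ)+1) := by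
      rw [← mul_div_assoc, div_le_iff₀ hpos]
      have h1 : Real.sqrt t * ((t:ℝ)+1) = Real.sqrt ((t:ℝ) * ((t:ℝ)+1)^2) := by
        rw [Real.sqrt_mul ht0, Real.sqrt_sq (by positivity)]
      have h2 : Real.sqrt ((t:ℝ)+1) * ((t:ℝ)+1-1/2)
          = Real.sqrt (((t:ℝ)+1) * ((t:ℝ)+1-1/2)^2) := by
        rw [Real.sqrt_mul (by positivity), Real.sqrt_sq (by positivity)]
      have h3 : (t:ℝ) * ((t:ℝ)+1)^2 ≤ ((t:ℝ)+1) * ((t:ℝ)+1-1/2)^2 := by nlinarith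
      have h4 := Real.sqrt_le_sqrt h3
      calc 2 * Real.sqrt t * ((t:ℝ)+1) = 2 * (Real.sqrt t * ((t:ℝ)+1)) := by ring
        _ ≤ 2 * (Real.sqrt ((t:ℝ)+1) * ((t:ℝ)+1-1/2)) := by rw [h1, h2]; linarith
        _ = 2 * Real.sqrt ((t:ℝ)+1) * ((t:ℝ)+1-1/2) := by ring
    rw [Finset.prod_Icc_succ_top (by omega)]
    push_cast
    calc (∏ x ∈ Finset.Icc 1 t, (x : ℝ) / ((x : ℝ) - 1 / 2)) * (((t:ℝ)+1) / ((t:ℝ)+1 - 1/2))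
        ≤ 2 * Real.sqrt t * (((t:ℝ)+1) / ((t:ℝ)+1 - 1/2)) :=
          mul_le_mul_of_nonneg_right ih (by positivity)
      _ ≤ 2 * Real.sqrt ((t:ℝ)+1) := key

open MeasureTheory ProbabilityTheory in
/-- MGF of a sum of independent geometrics: let `W x ~ Geo(βx/n)` (number of trials
until first success) for `x = 1,…,t` be independent, `0 < β ≤ 1`, `βt ≤ n`, and
`W = Σ_x W x`.  With `e^λ = 1/(1 − β/(2n))` one has
`E[e^{λW}] = ∏_{x=1}^t x/(x − 1/2) ≤ 2√t`, and consequently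
`Pr(W ≥ C n ln t / β) ≤ 2 t^{(1−C)/2}` for any `C > 1`. -/
theorem stmt_16 {Ω : Type*} [MeasurableSpace Ω] (μ : Measure Ω) [IsProbabilityMeasure μ]
    (t n : ℕ) (ht : 0 < t) (hn : 0 < n) (β : ℝ) (hβ0 : 0 < β) (hβ1 : β ≤ 1)
    (hβt : β * t ≤ n)
    (W : Fin t → Ω → ℕ) (hmeas : ∀ x, Measurable (W x))
    (hindep : iIndepFun W μ)
    (hgeom : ∀ x : Fin t, ∀ k : ℕ, 1 ≤ k →
      μ {ω | W x ω = k}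
        = ENNReal.ofReal ((1 - β * ((x : ℕ) + 1) / n) ^ (k - 1) * (β * ((x : ℕ) + 1) / n)))
    (lam : ℝ) (hlam : Real.exp lam = 1 / (1 - β / (2 * n))) :
    (∫ ω, Real.exp (lam * (∑ x, W x ω : ℕ)) ∂μ)
        = ∏ x ∈ Finset.Icc 1 t, (x : ℝ) / ((x : ℝ) - 1 / 2) ∧
      ∏ x ∈ Finset.Icc 1 t, (x : ℝ) / ((x : ℝ) - 1 / 2) ≤ 2 * Real.sqrt t ∧
      ∀ C : ℝ, 1 < C →
        (μ {ω | C * (n * Real.log t) / β ≤ (∑ x, W x ω : ℕ)}).toReal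
          ≤ 2 * (t : ℝ) ^ ((1 - C) / 2) := by
  have hn0 : (0:ℝ) < n := by exact_mod_cast hn
  have ht1 : (1:ℝ) ≤ (t:ℝ) := by exact_mod_cast ht
  set q : ℝ := β / (2 * n) with hqdef
  have hq0 : 0 < q := by positivity
  have hq1 : q < 1 := by
    rw [hqdef, div_lt_one (by positivity)]
    nlinarith
  have h1q : (0:ℝ) < 1 - q := by linarith
  have hel : Real.exp lam = (1 - q)⁻¹ := by rw [hlam, one_div]
  have hlam_pos : 0 < lam := by
    have h1 : (1:ℝ) < Real.exp lam := by
      rw [hel]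
      exact (one_lt_inv₀ h1q).mpr (by linarith)
    rw [show (1:ℝ) = Real.exp 0 by simp] at h1
    exact Real.exp_lt_exp.mp h1
  -- the real-valued random variables
  set X : Fin t → Ω → ℝ := fun x ω => ((W x ω : ℕ) : ℝ) with hX
  have hXmeas : ∀ x, Measurable (X x) := fun x => measurable_from_top.comp (hmeas x)
  have hindepX : iIndepFun X μ :=
    hindep.comp (fun _ => (Nat.cast : ℕ → ℝ)) (fun _ => measurable_from_top)
  -- parameters for each coordinate
  have hp_facts : ∀ x : Fin t,
      0 < β * ((x : ℕ) + 1) / n ∧ β * ((x : ℕ) + 1) / n ≤ 1 ∧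
      q < β * ((x : ℕ) + 1) / n := by
    intro x
    have hx1 : ((x : ℕ) : ℝ) + 1 ≤ (t : ℝ) := by
      have := x.2
      exact_mod_cast Nat.succ_le_of_lt this
    have hp0 : 0 < β * ((x : ℕ) + 1) / n := by positivity
    refine ⟨hp0, ?_, ?_⟩
    · rw [div_le_one hn0]
      nlinarith
    · rw [hqdef, div_lt_div_iff₀ (by positivity) hn0]
      nlinarith [mul_pos hβ0 hn0,
        mul_nonneg (mul_nonneg hβ0.le (Nat.cast_nonneg (x : ℕ))) hn0.le]
  -- per-coordinate lintegral
  have key : ∀ x : Fin t,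
      (∫⁻ ω, ENNReal.ofReal (Real.exp (lam * X x ω)) ∂μ)
        = ENNReal.ofReal ((((x:ℕ):ℝ) + 1) / ((((x:ℕ):ℝ) + 1) - 1/2)) := by
    intro x
    obtain ⟨hp0, hp1, hqp⟩ := hp_facts x
    set p : ℝ := β * ((x : ℕ) + 1) / n with hpdef
    have hlt : (1 - p) * Real.exp lam < 1 := by
      rw [hel, mul_inv_lt_iff₀ h1q, one_mul]
      linarith
    rw [geom_lintegral_exp μ (W x) (hmeas x) p hp0 hp1 (hgeom x) lam hlt]
    congr 1
    have h1 : 1 - (1 - p) * Real.exp lam = (p - q) * (1 - q)⁻¹ := by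
      rw [hel]
      field_simp
      ring
    rw [h1, hel]
    rw [show p * (1 - q)⁻¹ / ((p - q) * (1 - q)⁻¹) = p / (p - q) by
      rw [mul_div_mul_right _ _ (inv_ne_zero h1q.ne')]]
    have hm2 : (0:ℝ) < ((x:ℕ):ℝ) + 1 - 1/2 := by
      nlinarith [(Nat.cast_nonneg (x : ℕ) : (0:ℝ) ≤ (x : ℕ))]
    rw [div_eq_div_iff (by linarith) (by linarith)]
    rw [hpdef, hqdef]
    field_simp
  -- per-coordinate mgf and integrability
  have hnn : ∀ x : Fin t, (0 : Ω → ℝ) ≤ᵐ[μ] fun ω => Real.exp (lam * X x ω) :=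
    fun x => Filter.Eventually.of_forall (fun ω => by
      simpa using (Real.exp_pos (lam * X x ω)).le)
  have hmgf : ∀ x : Fin t,
      mgf (X x) μ lam = (((x:ℕ):ℝ) + 1) / ((((x:ℕ):ℝ) + 1) - 1/2) := by
    intro x
    have hm2 : (0:ℝ) < ((x:ℕ):ℝ) + 1 - 1/2 := by
      nlinarith [(Nat.cast_nonneg (x : ℕ) : (0:ℝ) ≤ (x : ℕ))]
    rw [mgf, integral_eq_lintegral_of_nonneg_ae (hnn x)
      ((hXmeas x).const_mul lam).exp.aestronglyMeasurable, key x,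
      ENNReal.toReal_ofReal (by positivity)]
  have hint : ∀ x : Fin t, Integrable (fun ω => Real.exp (lam * X x ω)) μ := by
    intro x
    refine ⟨((hXmeas x).const_mul lam).exp.aestronglyMeasurable, ?_⟩
    rw [hasFiniteIntegral_iff_ofReal (hnn x), key x]
    exact ENNReal.ofReal_lt_top
  -- the sum as a real random variable
  have hS : ∀ ω, ((∑ x, W x ω : ℕ) : ℝ) = (∑ x, X x) ω := by
    intro ω
    rw [Finset.sum_apply]
    push_cast
    rfl
  -- product over Fin t equals product over Icc
  have hprodeq : (∏ x : Fin t, ((((x:ℕ):ℝ) + 1) / ((((x:ℕ):ℝ) + 1) - 1/2)))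
      = ∏ x ∈ Finset.Icc 1 t, (x : ℝ) / ((x : ℝ) - 1 / 2) := by
    rw [Fin.prod_univ_eq_prod_range (fun i => (((i:ℕ):ℝ) + 1) / ((((i:ℕ):ℝ) + 1) - 1/2)) t]
    rw [← Finset.Ico_add_one_right_eq_Icc, Finset.prod_Ico_eq_prod_range]
    apply Finset.prod_congr rfl
    intro i _
    push_cast
    ring_nf
  -- first conjunct
  have hmain : (∫ ω, Real.exp (lam * (∑ x, W x ω : ℕ)) ∂μ)
      = ∏ x ∈ Finset.Icc 1 t, (x : ℝ) / ((x : ℝ) - 1 / 2) := by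
    have : (∫ ω, Real.exp (lam * (∑ x, W x ω : ℕ)) ∂μ) = mgf (∑ x, X x) μ lam := by
      rw [mgf]
      congr 1
      ext ω
      rw [hS ω]
    rw [this, hindepX.mgf_sum hXmeas Finset.univ]
    rw [← hprodeq]
    exact Finset.prod_congr rfl (fun x _ => hmgf x)
  have hle : ∏ x ∈ Finset.Icc 1 t, (x : ℝ) / ((x : ℝ) - 1 / 2) ≤ 2 * Real.sqrt t :=
    prod_ratio_le_two_sqrt t ht
  refine ⟨hmain, hle, ?_⟩
  -- the tail bound
  intro C hC
  have hintS : Integrable (fun ω => Real.exp (lam * (∑ x, X x) ω)) μ :=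
    hindepX.integrable_exp_mul_sum hXmeas (fun x _ => hint x)
  have hset : {ω | C * (n * Real.log t) / β ≤ ((∑ x, W x ω : ℕ) : ℝ)}
      = {ω | C * (n * Real.log t) / β ≤ (∑ x, X x) ω} := by
    ext ω; rw [Set.mem_setOf_eq, Set.mem_setOf_eq, hS ω]
  have hmarkov := measure_ge_le_exp_mul_mgf (μ := μ) (X := ∑ x, X x)
    (C * (n * Real.log t) / β) hlam_pos.le hintS
  rw [← hset] at hmarkov
  refine hmarkov.trans ?_
  -- bound exp(-lam ε) * mgf ≤ 2 t^((1-C)/2)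
  have hmgfS : mgf (∑ x, X x) μ lam = ∏ x ∈ Finset.Icc 1 t, (x : ℝ) / ((x : ℝ) - 1 / 2) := by
    rw [hindepX.mgf_sum hXmeas Finset.univ, ← hprodeq]
    exact Finset.prod_congr rfl (fun x _ => hmgf x)
  rw [hmgfS]
  have hlogt : 0 ≤ Real.log t := Real.log_nonneg ht1
  have hlamq : q ≤ lam := by
    have h1 : lam = Real.log ((1 - q)⁻¹) := by rw [← hel, Real.log_exp]
    have h2 : Real.log (1 - q) ≤ -q := by
      have := Real.log_le_sub_one_of_pos h1q
      linarith
    rw [h1, Real.log_inv]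
    linarith
  have hε0 : 0 ≤ C * (n * Real.log t) / β := by positivity
  have hexp_le : Real.exp (-lam * (C * (n * Real.log t) / β))
      ≤ (t:ℝ) ^ (-(C / 2)) := by
    have hq_eps : q * (C * (n * Real.log t) / β) = C / 2 * Real.log t := by
      rw [hqdef]; field_simp
    have h1 : C / 2 * Real.log t ≤ lam * (C * (n * Real.log t) / β) := by
      rw [← hq_eps]
      exact mul_le_mul_of_nonneg_right hlamq hε0
    have h2 : Real.exp (-lam * (C * (n * Real.log t) / β))
        ≤ Real.exp (-(C / 2 * Real.log t)) := by
      apply Real.exp_le_exp.mpr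
      linarith
    refine h2.trans_eq ?_
    rw [Real.rpow_def_of_pos (by linarith : (0:ℝ) < (t:ℝ))]
    congr 1
    ring
  calc Real.exp (-lam * (C * (n * Real.log t) / β))
        * ∏ x ∈ Finset.Icc 1 t, (x : ℝ) / ((x : ℝ) - 1 / 2)
      ≤ (t:ℝ) ^ (-(C / 2)) * (2 * Real.sqrt t) := by
        apply mul_le_mul hexp_le hle ?_ (by positivity)
        apply Finset.prod_nonneg
        intro x hx
        have hx1 : 1 ≤ x := (Finset.mem_Icc.mp hx).1
        have : (1:ℝ) ≤ (x:ℝ) := by exact_mod_cast hx1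
        have : (0:ℝ) < (x:ℝ) - 1/2 := by linarith
        positivity
    _ = 2 * (t : ℝ) ^ ((1 - C) / 2) := by
        rw [Real.sqrt_eq_rpow]
        rw [show (t:ℝ) ^ (-(C/2)) * (2 * (t:ℝ) ^ ((1:ℝ)/2))
          = 2 * ((t:ℝ) ^ (-(C/2)) * (t:ℝ) ^ ((1:ℝ)/2)) by ring]
        rw [← Real.rpow_add (by linarith : (0:ℝ) < (t:ℝ))]
        norm_num
        ring_nf
end
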